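/- Suppose the potentials U_k are C¹, the potentials V_k are C², and there exists R ≥ 0 such that V_k''(x) > 0 whenever |x| ≥ R (for every k). Set M := 1 + max_{1 ≤ k ≤ N−1} max_{|x| ≤ R} |V_k'(x)| and let a > R be such that U_k'(x) ≥ 2M for all x ≥ a and all 1 ≤ k ≤ N. Then every solution q ∈ ℝ^N of the equilibrium system satisfies q_k < a for every 1 ≤ k ≤ N. -/

import Mathlib

open Real Finset

noncomputable section

/-- Iterated Lie derivative `L_F^k g` of `g` along the vector field `F`. -/
def iterLie {E : Type*} [NormedAddCommGroup E] [NormedSpace ℝ E]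
    (F : E → E) : ℕ → (E → ℝ) → E → ℝ
  | 0 => fun g => g
  | k + 1 => fun g x => fderiv ℝ (iterLie F k g) x (F x)

/-- Phase space of a chain of `N` oscillators: `(p, q)`. -/
abbrev OscState (N : ℕ) : Type := (Fin N → ℝ) × (Fin N → ℝ)

/-- Position with 0-based natural index, `0` out of range. -/
def qc {N : ℕ} (x : OscState N) (i : ℕ) : ℝ := if h : i < N then x.2 ⟨i, h⟩ else 0

/-- Position with 0-based natural index, `0` out of range (for a configuration). -/
def qe {N : ℕ} (q : Fin N → ℝ) (i : ℕ) : ℝ := if h : i < N then q ⟨i, h⟩ else 0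

/-- Hamiltonian of the oscillator chain. -/
def HamO (N : ℕ) (U V : ℕ → ℝ → ℝ) (x : OscState N) : ℝ :=
  ∑ i : Fin N, (x.1 i) ^ 2 / 2 + ∑ i : Fin N, U i (x.2 i)
    + ∑ i ∈ Finset.range (N - 1), V i (qc x i - qc x (i + 1))

/-- Vector field of the oscillator chain with damping on the first oscillator. -/
def FOsc (N : ℕ) (U V : ℕ → ℝ → ℝ) (x : OscState N) : OscState N :=
  (fun i => -(if (i : ℕ) = 0 then x.1 i else 0) - deriv (U i) (x.2 i)
      + (if (i : ℕ) = 0 then 0 else deriv (V ((i : ℕ) - 1)) (qc x ((i : ℕ) - 1) - x.2 i))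
      - deriv (V i) (x.2 i - qc x ((i : ℕ) + 1)),
   fun i => x.1 i)

/-- The equilibrium system for the configuration `q`. -/
def IsEquilib (N : ℕ) (U V : ℕ → ℝ → ℝ) (q : Fin N → ℝ) : Prop :=
  ∀ i : Fin N,
    deriv (U i) (q i)
      - (if (i : ℕ) = 0 then 0 else deriv (V ((i : ℕ) - 1)) (qe q ((i : ℕ) - 1) - q i))
      + deriv (V i) (q i - qe q ((i : ℕ) + 1)) = 0

theorem stmt18 (N : ℕ) (hN : 2 ≤ N) (U V : ℕ → ℝ → ℝ)
    (hUsm : ∀ i < N, ContDiff ℝ 1 (U i)) (hVsm : ∀ i < N - 1, ContDiff ℝ 2 (V i))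
    (hVtop : ∀ i, N - 1 ≤ i → V i = fun _ => 0)
    (R : ℝ) (hR : 0 ≤ R)
    (hVconv : ∀ i < N - 1, ∀ x : ℝ, R ≤ |x| → 0 < deriv (deriv (V i)) x)
    (M : ℝ)
    (hM : M = 1 + sSup {y : ℝ | ∃ i < N - 1, ∃ x : ℝ, |x| ≤ R ∧ y = |deriv (V i) x|})
    (a : ℝ) (haR : R < a)
    (hUa : ∀ i < N, ∀ x : ℝ, a ≤ x → 2 * M ≤ deriv (U i) x)
    (q : Fin N → ℝ) (hq : IsEquilib N U V q) :
    ∀ i : Fin N, q i < a := by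
  -- continuity / differentiability of deriv (V i)
  have hcont : ∀ i < N - 1, Continuous (deriv (V i)) := by
    intro i hi
    have h2 : ContDiff ℝ ((1 : ℕ∞) + 1) (V i) := by
      have := hVsm i hi; norm_num at this ⊢; exact this
    have := (contDiff_succ_iff_deriv.mp h2).2.2
    exact this.continuous
  set S : Set ℝ := {y : ℝ | ∃ i < N - 1, ∃ x : ℝ, |x| ≤ R ∧ y = |deriv (V i) x|} with hSdef
  have key : ∀ i : ℕ, ∃ C : ℝ, ∀ x : ℝ, |x| ≤ R → i < N - 1 → |deriv (V i) x| ≤ C := by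
    intro i
    by_cases hi : i < N - 1
    · obtain ⟨C, hC⟩ := (isCompact_Icc (a := -R) (b := R)).exists_bound_of_continuousOn
        ((hcont i hi).continuousOn)
      exact ⟨C, fun x hx _ => by
        have := hC x (by rw [Set.mem_Icc]; exact abs_le.mp hx)
        simpa using this⟩
    · exact ⟨0, fun x _ h => absurd h hi⟩
  choose c hc using key
  have hne : (Finset.range (N - 1)).Nonempty := ⟨0, by simp; omega⟩
  have hbdd : BddAbove S := by
    refine ⟨(Finset.range (N - 1)).sup' hne c, ?_⟩
    rintro y ⟨i, hi, x, hx, rfl⟩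
    exact le_trans (hc i x hx hi) (Finset.le_sup' c (Finset.mem_range.mpr hi))
  have hmem0 : (|deriv (V 0) 0| : ℝ) ∈ S := ⟨0, by omega, 0, by simpa using hR, rfl⟩
  have hM1 : 1 ≤ M := by
    have := le_csSup hbdd hmem0
    have h0 : (0:ℝ) ≤ |deriv (V 0) 0| := abs_nonneg _
    linarith [hM]
  have habs : ∀ i < N - 1, ∀ x : ℝ, |x| ≤ R → |deriv (V i) x| ≤ M - 1 := by
    intro i hi x hx
    have : |deriv (V i) x| ∈ S := ⟨i, hi, x, hx, rfl⟩
    have := le_csSup hbdd this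
    linarith [hM]
  have hdiff : ∀ i < N - 1, Differentiable ℝ (deriv (V i)) := by
    intro i hi
    have h2 : ContDiff ℝ ((1 : ℕ∞) + 1) (V i) := by
      have := hVsm i hi; norm_num at this ⊢; exact this
    have := (contDiff_succ_iff_deriv.mp h2).2.2
    exact this.differentiable (by simp)
  have hVlb : ∀ i < N - 1, ∀ x : ℝ, 0 ≤ x → -(M - 1) ≤ deriv (V i) x := by
    intro i hi x hx
    by_cases hxR : x ≤ R
    · have := habs i hi x (by rwa [abs_of_nonneg hx])
      linarith [abs_le.mp this]
    · push_neg at hxR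
      have hmono : StrictMonoOn (deriv (V i)) (Set.Icc R x) := by
        apply strictMonoOn_of_deriv_pos (convex_Icc R x) ((hcont i hi).continuousOn)
        intro y hy
        rw [interior_Icc] at hy
        exact hVconv i hi y (le_abs_self y |>.trans' hy.1.le)
      have h1 : deriv (V i) R ≤ deriv (V i) x :=
        (hmono (Set.left_mem_Icc.mpr hxR.le) (Set.right_mem_Icc.mpr hxR.le) hxR).le
      have h2 := habs i hi R (by rw [abs_of_nonneg hR])
      linarith [abs_le.mp h2]
  have hVub : ∀ i < N - 1, ∀ x : ℝ, x ≤ 0 → deriv (V i) x ≤ M - 1 := by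
    intro i hi x hx
    by_cases hxR : -R ≤ x
    · have := habs i hi x (abs_le.mpr ⟨hxR, hx.trans hR⟩)
      linarith [abs_le.mp this]
    · push_neg at hxR
      have hmono : StrictMonoOn (deriv (V i)) (Set.Icc x (-R)) := by
        apply strictMonoOn_of_deriv_pos (convex_Icc x (-R)) ((hcont i hi).continuousOn)
        intro y hy
        rw [interior_Icc] at hy
        have : R ≤ |y| := by
          rw [abs_of_nonpos (by linarith [hy.2])]
          linarith [hy.2]
        exact hVconv i hi y this
      have h1 : deriv (V i) x ≤ deriv (V i) (-R) :=
        (hmono (Set.left_mem_Icc.mpr hxR.le) (Set.right_mem_Icc.mpr hxR.le) hxR).le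
      have h2 := habs i hi (-R) (by rw [abs_neg, abs_of_nonneg hR])
      linarith [abs_le.mp h2]
  by_contra hcon
  push_neg at hcon
  obtain ⟨j, hj⟩ := hcon
  obtain ⟨m, -, hm⟩ := Finset.exists_max_image (Finset.univ : Finset (Fin N)) q
    ⟨j, Finset.mem_univ j⟩
  have hqm : a ≤ q m := le_trans hj (hm j (Finset.mem_univ j))
  have heq := hq m
  have hA : (if (m : ℕ) = 0 then 0
      else deriv (V ((m : ℕ) - 1)) (qe q ((m : ℕ) - 1) - q m)) ≤ M - 1 := by
    split
    · linarith
    · rename_i hm0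
      have hm1 : (m : ℕ) - 1 < N - 1 := by omega
      have hlt : (m : ℕ) - 1 < N := by omega
      apply hVub _ hm1
      rw [qe, dif_pos hlt]
      linarith [hm ⟨(m : ℕ) - 1, hlt⟩ (Finset.mem_univ _)]
  have hB : -(M - 1) ≤ deriv (V (m : ℕ)) (q m - qe q ((m : ℕ) + 1)) := by
    by_cases hmN : (m : ℕ) + 1 < N
    · have hm1 : (m : ℕ) < N - 1 := by omega
      apply hVlb _ hm1
      rw [qe, dif_pos hmN]
      linarith [hm ⟨(m : ℕ) + 1, hmN⟩ (Finset.mem_univ _)]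
    · have hmt : N - 1 ≤ (m : ℕ) := by omega
      rw [hVtop (m : ℕ) hmt]
      simp only [deriv_const']
      linarith
  have hU : 2 * M ≤ deriv (U (m : ℕ)) (q m) := hUa m m.isLt _ hqm
  linarith
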